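/- Let n ≥ 1 be an integer, let W = n + 4 and Q = 2^(2W), and let M(n) be the rational number (2^W − n² + 1)·(Q^((n+1)²) − 1)/(2^W + 1) + 2·n·Q^(n+2)·(2^W − 1)·(Q^(n+1)·n − Q^n·(n+1) + 1)·(Q^((n+1)²)·n − Q^((n+1)·n)·(n+1) + 1)/((Q − 1)²·(Q^(n+1) − 1)²) − Q^(n+2)·(2^W − 1)·(Q^(n+2)·n² − Q^(n+1)·(2n² + 2n − 1) + Q^n·(n+1)² − Q − 1)·(Q^((n+1)·(n+2))·n² − Q^((n+1)²)·(2n² + 2n − 1) + Q^((n+1)·n)·(n+1)² − Q^(n+1) − 1)/((Q − 1)³·(Q^(n+1) − 1)³). Then M(n) is a nonnegative integer and HW(M(n)) = (n + 4)·(τ(n) + (n+1)²); equivalently, τ(n) = HW(M(n))/(n+4) − (n+1)². -/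

import Mathlib

/-- The Hamming weight of a natural number: the sum of its base-2 digits. -/
def HW (n : ℕ) : ℕ := (Nat.digits 2 n).sum

lemma HW_bit (m r : ℕ) (hr : r < 2) : HW (2 * m + r) = HW m + r := by
  rcases Nat.eq_zero_or_pos (2 * m + r) with h | h
  · have h1 : m = 0 ∧ r = 0 := by omega
    simp [HW, h1.1, h1.2]
  · unfold HW
    rw [Nat.digits_def' (by norm_num : 1 < 2) h]
    have h2 : (2 * m + r) % 2 = r := by omega
    have h3 : (2 * m + r) / 2 = m := by omega
    rw [h2, h3, List.sum_cons]
    omega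

lemma HW_add_pow_mul (B : ℕ) : ∀ b t : ℕ, b < 2 ^ B → HW (b + 2 ^ B * t) = HW b + HW t := by
  induction B with
  | zero => intro b t hb; interval_cases b; simp [HW]
  | succ B ih =>
    intro b t hb
    have hb2 : b / 2 < 2 ^ B := by omega
    have e1 : b + 2 ^ (B + 1) * t = 2 * (b / 2 + 2 ^ B * t) + b % 2 := by
      have := Nat.div_add_mod b 2; ring_nf; omega
    have e2 : b = 2 * (b / 2) + b % 2 := by omega
    rw [e1, HW_bit _ _ (Nat.mod_lt _ (by norm_num)), ih _ _ hb2]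
    conv_rhs => rw [e2, HW_bit _ _ (Nat.mod_lt _ (by norm_num))]
    omega

lemma HW_compl (B : ℕ) : ∀ e : ℕ, e < 2 ^ B → HW e + HW (2 ^ B - 1 - e) = B := by
  induction B with
  | zero => intro e he; interval_cases e; simp [HW]
  | succ B ih =>
    intro e he
    have h2 : e / 2 < 2 ^ B := by omega
    have hc : 2 ^ B - 1 - e / 2 < 2 ^ B := by
      have : 0 < 2 ^ B := Nat.pow_pos (by norm_num)
      omega
    have e1 : e = 2 * (e / 2) + e % 2 := by omega
    have e2 : 2 ^ (B + 1) - 1 - e = 2 * (2 ^ B - 1 - e / 2) + (1 - e % 2) := by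
      have h0 : 0 < 2 ^ B := Nat.pow_pos (by norm_num)
      have := Nat.div_add_mod e 2
      have hp : 2 ^ (B + 1) = 2 * 2 ^ B := by ring
      omega
    have he' : HW e = HW (e / 2) + e % 2 := by
      conv_lhs => rw [e1]
      rw [HW_bit _ _ (Nat.mod_lt _ (by norm_num))]
    rw [e2, HW_bit _ _ (by omega), he']
    have := ih (e / 2) h2
    omega

lemma HW_pow_sub_one (B : ℕ) : HW (2 ^ B - 1) = B := by
  have := HW_compl B 0 (Nat.pow_pos (by norm_num))
  simpa [HW] using this

open Finset in
lemma blocks_lt (B m : ℕ) (a : ℕ → ℕ) (ha : ∀ k, a k < 2 ^ B) :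
    ∑ k ∈ range m, a k * 2 ^ (B * k) < 2 ^ (B * m) := by
  induction m with
  | zero => simpa using Nat.pos_pow_of_pos _ (by norm_num)
  | succ m ih =>
    rw [Finset.sum_range_succ]
    have h1 : a m * 2 ^ (B * m) ≤ (2 ^ B - 1) * 2 ^ (B * m) :=
      Nat.mul_le_mul_right _ (by have := ha m; omega)
    have h2 : 2 ^ (B * (m + 1)) = 2 ^ B * 2 ^ (B * m) := by
      rw [← pow_add]; ring_nf
    have hp : 0 < 2 ^ (B * m) := Nat.pow_pos (by norm_num)
    have hp2 : 0 < 2 ^ B := Nat.pow_pos (by norm_num)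
    calc ∑ k ∈ range m, a k * 2 ^ (B * k) + a m * 2 ^ (B * m)
        < 2 ^ (B * m) + (2 ^ B - 1) * 2 ^ (B * m) := by omega
      _ = 2 ^ B * 2 ^ (B * m) := by
            have hle : 2 ^ (B * m) ≤ 2 ^ B * 2 ^ (B * m) := Nat.le_mul_of_pos_left _ hp2
            rw [Nat.sub_mul, one_mul]; omega
      _ = 2 ^ (B * (m + 1)) := h2.symm

open Finset in
lemma HW_blocks (B : ℕ) : ∀ (m : ℕ) (a : ℕ → ℕ), (∀ k, a k < 2 ^ B) →
    HW (∑ k ∈ range m, a k * 2 ^ (B * k)) = ∑ k ∈ range m, HW (a k) := by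
  intro m
  induction m with
  | zero => simp [HW]
  | succ m ih =>
    intro a ha
    have e1 : ∑ k ∈ range (m + 1), a k * 2 ^ (B * k)
        = a 0 + 2 ^ B * ∑ k ∈ range m, a (k + 1) * 2 ^ (B * k) := by
      rw [Finset.sum_range_succ']
      simp only [Nat.mul_zero, pow_zero, Nat.mul_one]
      rw [Finset.mul_sum, add_comm]
      congr 1
      apply Finset.sum_congr rfl
      intro k _
      rw [Nat.mul_add, pow_add, Nat.mul_one]; ring
    rw [e1, HW_add_pow_mul B _ _ (ha 0), ih (fun k => a (k + 1)) (fun k => ha (k + 1)),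
      Finset.sum_range_succ']
    omega

open Finset in
lemma sum1_eq (x : ℚ) (m : ℕ) :
    (∑ i ∈ range (m + 1), (i : ℚ) * x ^ i) * (x - 1) ^ 2
      = x * ((m : ℚ) * x ^ (m + 1) - ((m : ℚ) + 1) * x ^ m + 1) := by
  induction m with
  | zero => simp
  | succ m ih =>
    rw [Finset.sum_range_succ, add_mul, ih]
    push_cast
    ring

open Finset in
lemma sum2_eq (x : ℚ) (m : ℕ) :
    (∑ i ∈ range (m + 1), (i : ℚ) ^ 2 * x ^ i) * (x - 1) ^ 3
      = x * ((m : ℚ) ^ 2 * x ^ (m + 2) - (2 * (m : ℚ) ^ 2 + 2 * (m : ℚ) - 1) * x ^ (m + 1)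
          + ((m : ℚ) + 1) ^ 2 * x ^ m - x - 1) := by
  induction m with
  | zero => simp
  | succ m ih =>
    rw [Finset.sum_range_succ, add_mul, ih]
    push_cast
    ring

lemma bound_lemma (n : ℕ) : (n ^ 2 - n + 1) ^ 2 ≤ 2 ^ (n + 4) := by
  induction n with
  | zero => norm_num
  | succ n ih =>
    rcases le_or_gt n 5 with h | h
    · interval_cases n <;> norm_num
    · have hs : (n + 1) ^ 2 - (n + 1) + 1 = n ^ 2 + n + 1 := by
        have : (n + 1) ^ 2 = n ^ 2 + 2 * n + 1 := by ring
        omega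
      have ht : n ^ 2 - n + n = n ^ 2 := by
        have : n ≤ n ^ 2 := Nat.le_self_pow (by norm_num) n
        omega
      have key : (n ^ 2 + n + 1) ^ 2 ≤ 2 * (n ^ 2 - n + 1) ^ 2 := by
        zify [Nat.le_self_pow (by norm_num : 2 ≠ 0) n]
        have hN : (6 : ℤ) ≤ (n : ℤ) := by exact_mod_cast h
        nlinarith [mul_nonneg (mul_nonneg (mul_nonneg (sub_nonneg.2 hN)
            (by positivity : (0:ℤ) ≤ (n:ℤ))) (by positivity : (0:ℤ) ≤ (n:ℤ)))
            (by positivity : (0:ℤ) ≤ (n:ℤ)), hN, sq_nonneg ((n:ℤ) - 1)]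
      calc ((n + 1) ^ 2 - (n + 1) + 1) ^ 2 = (n ^ 2 + n + 1) ^ 2 := by rw [hs]
        _ ≤ 2 * (n ^ 2 - n + 1) ^ 2 := key
        _ ≤ 2 * 2 ^ (n + 4) := by omega
        _ = 2 ^ (n + 1 + 4) := by ring

open Finset in
lemma card_pairs (n : ℕ) (hn : 1 ≤ n) :
    ((range (n + 1) ×ˢ range (n + 1)).filter (fun p => p.1 * p.2 = n)).card
      = n.divisors.card := by
  apply Finset.card_bij' (fun p _ => p.1) (fun d _ => (d, n / d))
  · intro p hp
    simp only [Finset.mem_filter, Finset.mem_product, Finset.mem_range] at hp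
    rw [Nat.mem_divisors]
    exact ⟨⟨p.2, hp.2.symm⟩, by omega⟩
  · intro d hd
    rw [Nat.mem_divisors] at hd
    simp only [Finset.mem_filter, Finset.mem_product, Finset.mem_range]
    have h1 : d ∣ n := hd.1
    have hd0 : 0 < d := Nat.pos_of_dvd_of_pos h1 (by omega)
    have h2 : d * (n / d) = n := Nat.mul_div_cancel' h1
    have h3 : d ≤ n := Nat.le_of_dvd (by omega) h1
    have h4 : n / d ≤ n := Nat.div_le_self n d
    exact ⟨⟨by omega, by omega⟩, h2⟩
  · intro p hp
    simp only [Finset.mem_filter, Finset.mem_product, Finset.mem_range] at hp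
    have hp1 : 0 < p.1 := by
      rcases Nat.eq_zero_or_pos p.1 with h | h
      · exfalso; rw [h] at hp; simp at hp; omega
      · exact h
    have : n / p.1 = p.2 := by
      rw [← hp.2, Nat.mul_div_cancel_left _ hp1]
    rw [this]
  · intro d hd
    rfl

lemma mul_pred_succ (p : ℕ) (hp : 1 ≤ p) : (p - 1) * (p + 1) = p * p - 1 := by
  have h2 : 1 ≤ p * p := Nat.one_le_iff_ne_zero.mpr (by positivity)
  zify [hp, h2]; ring

def dd (n i j : ℕ) : ℕ := (((i * j : ℕ) : ℤ) - (n : ℤ)).natAbs ^ 2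

def cc (W n i j : ℕ) : ℕ := (2 ^ W - 1) * (2 ^ W + 1 - dd n i j)

lemma dd_le (n i j : ℕ) (hi : i ≤ n) (hj : j ≤ n) :
    dd n i j ≤ 2 ^ (n + 4) := by
  have habs : (((i * j : ℕ) : ℤ) - (n : ℤ)).natAbs ≤ n ^ 2 - n + 1 := by
    have h1 : i * j ≤ n ^ 2 := by
      calc i * j ≤ n * n := Nat.mul_le_mul hi hj
        _ = n ^ 2 := (sq n).symm
    have h2 : n ≤ n ^ 2 := Nat.le_self_pow (by norm_num) n
    have h3 : 2 * n ≤ n ^ 2 + 1 := by nlinarith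
    omega
  calc dd n i j ≤ (n ^ 2 - n + 1) ^ 2 := Nat.pow_le_pow_left habs 2
    _ ≤ 2 ^ (n + 4) := bound_lemma n

lemma dd_eq_zero (n i j : ℕ) : dd n i j = 0 ↔ i * j = n := by
  unfold dd
  constructor
  · intro h
    have := pow_eq_zero_iff (n := 2) (by norm_num) |>.mp h
    have h2 : ((i * j : ℕ) : ℤ) - (n : ℤ) = 0 := Int.natAbs_eq_zero.mp this
    omega
  · intro h; simp [h]

lemma cc_lt (W n i j : ℕ) : cc W n i j < 2 ^ (2 * W) := by
  unfold cc
  have h1 : 2 ^ W + 1 - dd n i j ≤ 2 ^ W + 1 := Nat.sub_le _ _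
  have h2 : (2 ^ W - 1) * (2 ^ W + 1 - dd n i j) ≤ (2 ^ W - 1) * (2 ^ W + 1) :=
    Nat.mul_le_mul_left _ h1
  have hp : 1 ≤ 2 ^ W := Nat.one_le_two_pow
  have h3 : (2 ^ W - 1) * (2 ^ W + 1) = 2 ^ (2 * W) - 1 := by
    have hq : 2 ^ (2 * W) = 2 ^ W * 2 ^ W := by rw [← pow_add]; ring_nf
    rw [hq, mul_pred_succ _ hp]
  have h4 : 1 ≤ 2 ^ (2 * W) := Nat.one_le_two_pow
  omega

lemma HW_cc (W n i j : ℕ) (h : dd n i j ≤ 2 ^ W) :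
    HW (cc W n i j) = if i * j = n then 2 * W else W := by
  set d := dd n i j with hd
  split_ifs with hij
  · have hd0 : d = 0 := (dd_eq_zero n i j).mpr hij
    unfold cc
    rw [← hd, hd0]
    have hp : 1 ≤ 2 ^ W := Nat.one_le_two_pow
    have h3 : (2 ^ W - 1) * (2 ^ W + 1 - 0) = 2 ^ (2 * W) - 1 := by
      have hq : 2 ^ (2 * W) = 2 ^ W * 2 ^ W := by rw [← pow_add]; ring_nf
      rw [Nat.sub_zero, hq, mul_pred_succ _ hp]
    rw [h3, HW_pow_sub_one]
  · have hd1 : 1 ≤ d := by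
      rcases Nat.eq_zero_or_pos d with h0 | h0
      · exact absurd ((dd_eq_zero n i j).mp h0) hij
      · exact h0
    have hp : 1 ≤ 2 ^ W := Nat.one_le_two_pow
    have key : cc W n i j = (d - 1) + 2 ^ W * (2 ^ W - d) := by
      unfold cc
      rw [← hd]
      have hdle : d ≤ 2 ^ W + 1 := by omega
      zify [hdle, hd1, hp, h]
      ring
    rw [key, HW_add_pow_mul W _ _ (by omega)]
    have hc := HW_compl W (d - 1) (by omega)
    have he : 2 ^ W - 1 - (d - 1) = 2 ^ W - d := by omega
    rw [he] at hc
    omega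

lemma ccq (W n i j : ℕ) (h : dd n i j ≤ 2 ^ W) :
    (cc W n i j : ℚ)
      = ((2:ℚ) ^ W - 1) * (((2:ℚ) ^ W + 1) - ((i:ℚ) * (j:ℚ) - (n:ℚ)) ^ 2) := by
  have hp : (1:ℕ) ≤ 2 ^ W := Nat.one_le_two_pow
  have hdd : dd n i j ≤ 2 ^ W + 1 := by omega
  have hcast : ((dd n i j : ℕ) : ℚ) = ((i:ℚ) * (j:ℚ) - (n:ℚ)) ^ 2 := by
    unfold dd
    push_cast [Nat.cast_natAbs]
    rw [sq_abs]
  unfold cc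
  rw [Nat.cast_mul, Nat.cast_sub hdd, Nat.cast_sub hp]
  push_cast [hcast]
  ring

set_option maxHeartbeats 1000000 in
set_option maxRecDepth 8000 in
/-- The explicit arithmetic term `M(n)` is a nonnegative integer whose Hamming weight
equals `(n+4)·(τ(n) + (n+1)²)`; equivalently `τ(n) = HW(M(n))/(n+4) − (n+1)²`. -/
theorem stmt_8 (n : ℕ) (hn : 1 ≤ n) (W : ℕ) (hW : W = n + 4)
    (Q : ℚ) (hQ : Q = 2 ^ (2 * W)) :
    ∃ M : ℕ,
      (M : ℚ) =
          ((2 : ℚ) ^ W - (n : ℚ) ^ 2 + 1) * (Q ^ ((n + 1) ^ 2) - 1) / ((2 : ℚ) ^ W + 1)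
        + 2 * (n : ℚ) * Q ^ (n + 2) * ((2 : ℚ) ^ W - 1) *
            (Q ^ (n + 1) * (n : ℚ) - Q ^ n * ((n : ℚ) + 1) + 1) *
            (Q ^ ((n + 1) ^ 2) * (n : ℚ) - Q ^ ((n + 1) * n) * ((n : ℚ) + 1) + 1) /
            ((Q - 1) ^ 2 * (Q ^ (n + 1) - 1) ^ 2)
        - Q ^ (n + 2) * ((2 : ℚ) ^ W - 1) *
            (Q ^ (n + 2) * (n : ℚ) ^ 2 - Q ^ (n + 1) * (2 * (n : ℚ) ^ 2 + 2 * (n : ℚ) - 1)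
              + Q ^ n * ((n : ℚ) + 1) ^ 2 - Q - 1) *
            (Q ^ ((n + 1) * (n + 2)) * (n : ℚ) ^ 2
              - Q ^ ((n + 1) ^ 2) * (2 * (n : ℚ) ^ 2 + 2 * (n : ℚ) - 1)
              + Q ^ ((n + 1) * n) * ((n : ℚ) + 1) ^ 2 - Q ^ (n + 1) - 1) /
            ((Q - 1) ^ 3 * (Q ^ (n + 1) - 1) ^ 3) ∧
      HW M = (n + 4) * (n.divisors.card + (n + 1) ^ 2) := by
  subst hW
  set W := n + 4 with hW
  refine ⟨∑ j ∈ Finset.range (n + 1),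
      (∑ i ∈ Finset.range (n + 1), cc W n i j * 2 ^ (2 * W * i)) * 2 ^ ((2 * W * (n + 1)) * j),
    ?_, ?_⟩
  · -- rational identity
    have hQgt : (1:ℚ) < Q := by
      rw [hQ]; exact one_lt_pow₀ (by norm_num) (by omega)
    have hQ1 : Q - 1 ≠ 0 := sub_ne_zero.mpr hQgt.ne'
    have hygt : (1:ℚ) < Q ^ (n + 1) := one_lt_pow₀ hQgt (by omega)
    have hy1 : Q ^ (n + 1) - 1 ≠ 0 := sub_ne_zero.mpr hygt.ne'
    have hP1 : (2:ℚ) ^ W + 1 ≠ 0 := by positivity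
    have hQP : Q = ((2:ℚ) ^ W) ^ 2 := by rw [hQ, Nat.mul_comm, pow_mul]
    have e1 : Q ^ ((n + 1) ^ 2) = (Q ^ (n + 1)) ^ (n + 1) := by rw [← pow_mul, pow_two]
    have e2 : Q ^ ((n + 1) * n) = (Q ^ (n + 1)) ^ n := by rw [pow_mul]
    have e3 : Q ^ ((n + 1) * (n + 2)) = (Q ^ (n + 1)) ^ (n + 2) := by rw [pow_mul]
    have e4 : Q ^ (n + 2) = Q * Q ^ (n + 1) := by ring
    rw [e1, e2, e3, e4]
    set y := Q ^ (n + 1) with hyd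
    have hy1' : y - 1 ≠ 0 := hy1
    have hyQ1 : Q ^ (n + 1) - 1 ≠ 0 := by rw [← hyd]; exact hy1
    have H0q : (∑ i ∈ Finset.range (n + 1), Q ^ i) = (y - 1) / (Q - 1) := by
      rw [eq_div_iff hQ1, geom_sum_mul]
    have H0y : (∑ i ∈ Finset.range (n + 1), y ^ i) = (y ^ (n + 1) - 1) / (y - 1) := by
      rw [eq_div_iff hy1', geom_sum_mul]
    have H1q : (∑ i ∈ Finset.range (n + 1), (i : ℚ) * Q ^ i)
        = Q * ((n : ℚ) * Q ^ (n + 1) - ((n : ℚ) + 1) * Q ^ n + 1) / (Q - 1) ^ 2 := by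
      rw [eq_div_iff (pow_ne_zero 2 hQ1)]; exact sum1_eq Q n
    have H1y : (∑ i ∈ Finset.range (n + 1), (i : ℚ) * y ^ i)
        = y * ((n : ℚ) * y ^ (n + 1) - ((n : ℚ) + 1) * y ^ n + 1) / (y - 1) ^ 2 := by
      rw [eq_div_iff (pow_ne_zero 2 hy1')]; exact sum1_eq y n
    have H2q : (∑ i ∈ Finset.range (n + 1), (i : ℚ) ^ 2 * Q ^ i)
        = Q * ((n : ℚ) ^ 2 * Q ^ (n + 2) - (2 * (n : ℚ) ^ 2 + 2 * (n : ℚ) - 1) * Q ^ (n + 1)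
            + ((n : ℚ) + 1) ^ 2 * Q ^ n - Q - 1) / (Q - 1) ^ 3 := by
      rw [eq_div_iff (pow_ne_zero 3 hQ1)]; exact sum2_eq Q n
    have H2y : (∑ i ∈ Finset.range (n + 1), (i : ℚ) ^ 2 * y ^ i)
        = y * ((n : ℚ) ^ 2 * y ^ (n + 2) - (2 * (n : ℚ) ^ 2 + 2 * (n : ℚ) - 1) * y ^ (n + 1)
            + ((n : ℚ) + 1) ^ 2 * y ^ n - y - 1) / (y - 1) ^ 3 := by
      rw [eq_div_iff (pow_ne_zero 3 hy1')]; exact sum2_eq y n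
    push_cast
    have hMpt : ∀ j ∈ Finset.range (n + 1),
        (∑ i ∈ Finset.range (n + 1), (cc W n i j : ℚ) * (2:ℚ) ^ (2 * W * i))
            * (2:ℚ) ^ (2 * W * (n + 1) * j)
          = ∑ i ∈ Finset.range (n + 1),
              ((2:ℚ) ^ W - 1) * (((2:ℚ) ^ W + 1) - ((i:ℚ) * (j:ℚ) - (n:ℚ)) ^ 2)
                * (Q ^ i * y ^ j) := by
      intro j hj
      rw [Finset.sum_mul]
      apply Finset.sum_congr rfl
      intro i hi
      simp only [Finset.mem_range] at hi hj
      rw [ccq W n i j (by rw [hW]; exact dd_le n i j (by omega) (by omega))]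
      have p1 : (2:ℚ) ^ (2 * W * i) = Q ^ i := by rw [hQ, ← pow_mul]
      have p2 : (2:ℚ) ^ (2 * W * (n + 1) * j) = y ^ j := by
        rw [hyd, hQ, ← pow_mul, ← pow_mul, Nat.mul_assoc]
      rw [p1, p2]
      ring
    rw [Finset.sum_congr rfl hMpt, Finset.sum_comm]
    have p0 := Finset.sum_mul_sum (Finset.range (n + 1)) (Finset.range (n + 1))
      (fun i => Q ^ i) (fun j => y ^ j)
    have p1 := Finset.sum_mul_sum (Finset.range (n + 1)) (Finset.range (n + 1))
      (fun i => (i : ℚ) * Q ^ i) (fun j => (j : ℚ) * y ^ j)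
    have p2 := Finset.sum_mul_sum (Finset.range (n + 1)) (Finset.range (n + 1))
      (fun i => (i : ℚ) ^ 2 * Q ^ i) (fun j => (j : ℚ) ^ 2 * y ^ j)
    have hcomb : ∑ i ∈ Finset.range (n + 1), ∑ j ∈ Finset.range (n + 1),
        ((2:ℚ) ^ W - 1) * (((2:ℚ) ^ W + 1) - ((i:ℚ) * (j:ℚ) - (n:ℚ)) ^ 2) * (Q ^ i * y ^ j)
        = ((2:ℚ) ^ W - 1) *
            (((2:ℚ) ^ W - (n:ℚ) ^ 2 + 1)
                * ((∑ i ∈ Finset.range (n + 1), Q ^ i) * (∑ j ∈ Finset.range (n + 1), y ^ j))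
              + 2 * (n:ℚ) * ((∑ i ∈ Finset.range (n + 1), (i : ℚ) * Q ^ i)
                  * (∑ j ∈ Finset.range (n + 1), (j : ℚ) * y ^ j))
              - (∑ i ∈ Finset.range (n + 1), (i : ℚ) ^ 2 * Q ^ i)
                  * (∑ j ∈ Finset.range (n + 1), (j : ℚ) ^ 2 * y ^ j)) := by
      rw [p0, p1, p2]
      simp only [Finset.mul_sum, ← Finset.sum_add_distrib, ← Finset.sum_sub_distrib]
      apply Finset.sum_congr rfl
      intro i _
      apply Finset.sum_congr rfl
      intro j _
      ring
    rw [hcomb, H0q, H0y, H1q, H1y, H2q, H2y]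
    have g1 : ((2:ℚ) ^ W - (n:ℚ) ^ 2 + 1) * (y ^ (n + 1) - 1) / ((2:ℚ) ^ W + 1)
        = ((2:ℚ) ^ W - 1) * (((2:ℚ) ^ W - (n:ℚ) ^ 2 + 1)
            * ((y - 1) / (Q - 1) * ((y ^ (n + 1) - 1) / (y - 1)))) := by
      field_simp
      rw [hQP]
      ring
    have g2 : 2 * (n:ℚ) * (Q * y) * ((2:ℚ) ^ W - 1) * (y * (n:ℚ) - Q ^ n * ((n:ℚ) + 1) + 1) *
          (y ^ (n + 1) * (n:ℚ) - y ^ n * ((n:ℚ) + 1) + 1) / ((Q - 1) ^ 2 * (y - 1) ^ 2)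
        = ((2:ℚ) ^ W - 1) * (2 * (n:ℚ) *
            (Q * ((n:ℚ) * Q ^ (n + 1) - ((n:ℚ) + 1) * Q ^ n + 1) / (Q - 1) ^ 2 *
             (y * ((n:ℚ) * y ^ (n + 1) - ((n:ℚ) + 1) * y ^ n + 1) / (y - 1) ^ 2))) := by
      rw [hyd]
      field_simp
    have g3 : Q * y * ((2:ℚ) ^ W - 1) *
          (Q * y * (n:ℚ) ^ 2 - y * (2 * (n:ℚ) ^ 2 + 2 * (n:ℚ) - 1) + Q ^ n * ((n:ℚ) + 1) ^ 2 - Q - 1) *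
          (y ^ (n + 2) * (n:ℚ) ^ 2 - y ^ (n + 1) * (2 * (n:ℚ) ^ 2 + 2 * (n:ℚ) - 1)
            + y ^ n * ((n:ℚ) + 1) ^ 2 - y - 1)
          / ((Q - 1) ^ 3 * (y - 1) ^ 3)
        = ((2:ℚ) ^ W - 1) *
            (Q * ((n:ℚ) ^ 2 * Q ^ (n + 2) - (2 * (n:ℚ) ^ 2 + 2 * (n:ℚ) - 1) * Q ^ (n + 1)
                + ((n:ℚ) + 1) ^ 2 * Q ^ n - Q - 1) / (Q - 1) ^ 3 *
             (y * ((n:ℚ) ^ 2 * y ^ (n + 2) - (2 * (n:ℚ) ^ 2 + 2 * (n:ℚ) - 1) * y ^ (n + 1)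
                + ((n:ℚ) + 1) ^ 2 * y ^ n - y - 1) / (y - 1) ^ 3)) := by
      rw [hyd]
      field_simp
      ring
    clear_value y
    rw [g1, g2, g3]
    ring
  · -- Hamming weight
    have hblock : ∀ j, (∑ i ∈ Finset.range (n + 1), cc W n i j * 2 ^ (2 * W * i))
        < 2 ^ (2 * W * (n + 1)) :=
      fun j => blocks_lt (2 * W) (n + 1) _ (fun i => cc_lt W n i j)
    rw [HW_blocks (2 * W * (n + 1)) (n + 1) _ hblock]
    have hin : ∀ j ∈ Finset.range (n + 1),
        HW (∑ i ∈ Finset.range (n + 1), cc W n i j * 2 ^ (2 * W * i))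
          = ∑ i ∈ Finset.range (n + 1), HW (cc W n i j) := by
      intro j _
      exact HW_blocks (2 * W) (n + 1) _ (fun i => cc_lt W n i j)
    rw [Finset.sum_congr rfl hin]
    have hij : ∀ j ∈ Finset.range (n + 1), ∀ i ∈ Finset.range (n + 1),
        HW (cc W n i j) = if i * j = n then 2 * W else W := by
      intro j hj i hi
      simp only [Finset.mem_range] at hi hj
      exact HW_cc W n i j (by rw [hW]; exact dd_le n i j (by omega) (by omega))
    have step : ∑ j ∈ Finset.range (n + 1), ∑ i ∈ Finset.range (n + 1), HW (cc W n i j)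
        = ∑ j ∈ Finset.range (n + 1), ∑ i ∈ Finset.range (n + 1),
            (if j * i = n then 2 * W else W) := by
      apply Finset.sum_congr rfl
      intro j hj
      apply Finset.sum_congr rfl
      intro i hi
      rw [hij j hj i hi, Nat.mul_comm i j]
    rw [step, ← Finset.sum_product']
    have split : ∀ p ∈ Finset.range (n + 1) ×ˢ Finset.range (n + 1),
        (if p.1 * p.2 = n then 2 * W else W) = W + (if p.1 * p.2 = n then W else 0) := by
      intro p _
      split_ifs <;> omega
    rw [Finset.sum_congr rfl split, Finset.sum_add_distrib, Finset.sum_const,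
      ← Finset.sum_filter, Finset.sum_const, card_pairs n hn, Finset.card_product,
      Finset.card_range, smul_eq_mul, smul_eq_mul, hW]
    ring
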